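/- Assume (Φ1), assume |F(x,t)| ≤ c₁|t|^{q(x)} for all x ∈ Ω and t ∈ ℝ with a constant c₁ > 0, assume q⁺ < φ⁻, and assume there is c > 0 such that ‖u‖_{q(·)} ≤ c·‖u‖ for all u ∈ X. Then for every λ > 0 the functional J_λ is coercive on X: for every M ∈ ℝ there exists R > 0 such that every u ∈ X with ‖u‖ ≥ R satisfies J_λ(u) ≥ M. -/

import Mathlib

open MeasureTheory Set Filter
open scoped ENNReal

noncomputable section

abbrev Eucl (N : ℕ) := EuclideanSpace ℝ (Fin N)

variable {N : ℕ}

/-- `Q = ℝ^{2N} \ (CΩ)^2`. -/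
def Qset (Ω : Set (Eucl N)) : Set (Eucl N × Eucl N) := (Ωᶜ ×ˢ Ωᶜ)ᶜ

/-- `φ_{x,y}(t) = a(x,y,|t|) t` for `t ≠ 0`, `φ_{x,y}(0) = 0`. -/
def phiF (a : Eucl N → Eucl N → ℝ → ℝ) (x y : Eucl N) (t : ℝ) : ℝ :=
  if t = 0 then 0 else a x y |t| * t

/-- `Φ_{x,y}(t) = ∫₀ᵗ φ_{x,y}(τ) dτ`. -/
def PhiF (a : Eucl N → Eucl N → ℝ → ℝ) (x y : Eucl N) (t : ℝ) : ℝ :=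
  ∫ τ in (0:ℝ)..t, phiF a x y τ

/-- Gagliardo-type modular on `Q` at scale `lam`. -/
def modQ (a : Eucl N → Eucl N → ℝ → ℝ) (s : ℝ) (Ω : Set (Eucl N))
    (u : Eucl N → ℝ) (lam : ℝ) : ℝ≥0∞ :=
  ∫⁻ p in Qset Ω, ENNReal.ofReal
    (PhiF a p.1 p.2 (|u p.1 - u p.2| / (lam * dist p.1 p.2 ^ s)) / dist p.1 p.2 ^ (N : ℝ))

/-- Gagliardo-type modular on `Ω × Ω` at scale `lam`. -/
def modOO (a : Eucl N → Eucl N → ℝ → ℝ) (s : ℝ) (Ω : Set (Eucl N))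
    (u : Eucl N → ℝ) (lam : ℝ) : ℝ≥0∞ :=
  ∫⁻ p in Ω ×ˢ Ω, ENNReal.ofReal
    (PhiF a p.1 p.2 (|u p.1 - u p.2| / (lam * dist p.1 p.2 ^ s)) / dist p.1 p.2 ^ (N : ℝ))

/-- modular `∫_Ω Φ̂_x(|u|/λ)`. -/
def modO (a : Eucl N → Eucl N → ℝ → ℝ) (Ω : Set (Eucl N))
    (u : Eucl N → ℝ) (lam : ℝ) : ℝ≥0∞ :=
  ∫⁻ x in Ω, ENNReal.ofReal (PhiF a x x (|u x| / lam))

/-- modular `∫_{CΩ} β Φ̂_x(|u|/λ)`. -/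
def modB (a : Eucl N → Eucl N → ℝ → ℝ) (Ω : Set (Eucl N)) (β : Eucl N → ℝ)
    (u : Eucl N → ℝ) (lam : ℝ) : ℝ≥0∞ :=
  ∫⁻ x in Ωᶜ, ENNReal.ofReal (β x * PhiF a x x (|u x| / lam))

/-- Luxemburg infimum of a modular family (`∞` if no admissible `λ`). -/
def lux (m : ℝ → ℝ≥0∞) : ℝ≥0∞ :=
  sInf {l : ℝ≥0∞ | ∃ lam : ℝ, 0 < lam ∧ l = ENNReal.ofReal lam ∧ m lam ≤ 1}

/-- `‖u‖_X = [u]_{s,Φ,Q} + ‖u‖_{Φ̂} + ‖u‖_{Φ̂,β,CΩ}`. -/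
def normX (a : Eucl N → Eucl N → ℝ → ℝ) (s : ℝ) (Ω : Set (Eucl N)) (β : Eucl N → ℝ)
    (u : Eucl N → ℝ) : ℝ≥0∞ :=
  lux (modQ a s Ω u) + lux (modO a Ω u) + lux (modB a Ω β u)

/-- the modular `ρ_s`. -/
def rhoS (a : Eucl N → Eucl N → ℝ → ℝ) (s : ℝ) (Ω : Set (Eucl N)) (β : Eucl N → ℝ)
    (u : Eucl N → ℝ) : ℝ≥0∞ :=
  modQ a s Ω u 1 + modO a Ω u 1 + modB a Ω β u 1

/-- the modular norm `‖u‖ = inf {λ > 0 : ρ_s(u/λ) ≤ 1}`. -/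
def normM (a : Eucl N → Eucl N → ℝ → ℝ) (s : ℝ) (Ω : Set (Eucl N)) (β : Eucl N → ℝ)
    (u : Eucl N → ℝ) : ℝ≥0∞ :=
  sInf {l : ℝ≥0∞ | ∃ lam : ℝ, 0 < lam ∧ l = ENNReal.ofReal lam ∧
    rhoS a s Ω β (fun x => u x / lam) ≤ 1}

/-- `X` described via the norm `‖·‖_X`. -/
def XsetX (a : Eucl N → Eucl N → ℝ → ℝ) (s : ℝ) (Ω : Set (Eucl N)) (β : Eucl N → ℝ) :
    Set (Eucl N → ℝ) :=
  {u | Measurable u ∧ normX a s Ω β u < ⊤}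

/-- `X` described via the modular norm `‖·‖`. -/
def XsetM (a : Eucl N → Eucl N → ℝ → ℝ) (s : ℝ) (Ω : Set (Eucl N)) (β : Eucl N → ℝ) :
    Set (Eucl N → ℝ) :=
  {u | Measurable u ∧ (∃ lam : ℝ, 0 < lam ∧ rhoS a s Ω β (fun x => u x / lam) < ⊤) ∧
    normM a s Ω β u < ⊤}

/-- the fractional difference quotient `D^s u`. -/
def Du (s : ℝ) (u : Eucl N → ℝ) (p : Eucl N × Eucl N) : ℝ :=
  (u p.1 - u p.2) / dist p.1 p.2 ^ s

/-- `a(x,y,|D^s u|) D^s u`, with the convention that it vanishes when `u x = u y`. -/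
def Ku (a : Eucl N → Eucl N → ℝ → ℝ) (s : ℝ) (u : Eucl N → ℝ) (p : Eucl N × Eucl N) : ℝ :=
  if u p.1 = u p.2 then 0 else a p.1 p.2 |Du s u p| * Du s u p

/-- the form `A_s(u,v)`. -/
def Aform (a : Eucl N → Eucl N → ℝ → ℝ) (s : ℝ) (Ω : Set (Eucl N)) (β : Eucl N → ℝ)
    (u v : Eucl N → ℝ) : ℝ :=
  (1/2) * (∫ p in Qset Ω, Ku a s u p * Du s v p / dist p.1 p.2 ^ (N : ℝ))
  + (∫ x in Ω, a x x |u x| * u x * v x)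
  + ∫ x in Ωᶜ, β x * (a x x |u x| * u x * v x)

/-- the nonlocal normal derivative `𝒩^s_a u` on `CΩ`. -/
def Nop (a : Eucl N → Eucl N → ℝ → ℝ) (s : ℝ) (Ω : Set (Eucl N)) (u : Eucl N → ℝ)
    (x : Eucl N) : ℝ :=
  ∫ y in Ω, Ku a s u (x, y) / dist x y ^ ((N : ℝ) + s)

/-- `F(x,t) = ∫₀ᵗ f(x,τ) dτ`. -/
def Ff (f : Eucl N → ℝ → ℝ) (x : Eucl N) (t : ℝ) : ℝ := ∫ τ in (0:ℝ)..t, f x τ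

/-- the energy functional `J_λ`. -/
def Jlam (a : Eucl N → Eucl N → ℝ → ℝ) (s : ℝ) (Ω : Set (Eucl N)) (β : Eucl N → ℝ)
    (f : Eucl N → ℝ → ℝ) (lam : ℝ) (u : Eucl N → ℝ) : ℝ :=
  (1/2) * (modQ a s Ω u 1).toReal + (modO a Ω u 1).toReal + (modB a Ω β u 1).toReal
    - lam * ∫ x in Ω, Ff f x (u x)

/-- the variable-exponent Luxemburg norm `‖u‖_{q(·)}` on `Ω`. -/
def normq (Ω : Set (Eucl N)) (q : Eucl N → ℝ) (u : Eucl N → ℝ) : ℝ≥0∞ :=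
  sInf {l : ℝ≥0∞ | ∃ lam : ℝ, 0 < lam ∧ l = ENNReal.ofReal lam ∧
    (∫⁻ x in Ω, ENNReal.ofReal (|u x / lam| ^ q x)) ≤ 1}

section Helpers

variable {N : ℕ} {a : Eucl N → Eucl N → ℝ → ℝ} {x y : Eucl N}

lemma phiF_zero : phiF a x y 0 = 0 := if_pos rfl

lemma phiF_pos (hmono : StrictMono (phiF a x y)) {t : ℝ} (ht : 0 < t) :
    0 < phiF a x y t := by
  have := hmono ht
  rwa [phiF_zero] at this

lemma phiF_nonneg (hmono : StrictMono (phiF a x y)) {t : ℝ} (ht : 0 ≤ t) :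
    0 ≤ phiF a x y t := by
  rcases ht.eq_or_lt with h | h
  · rw [← h, phiF_zero]
  · exact (phiF_pos hmono h).le

lemma PhiF_zero : PhiF a x y 0 = 0 := intervalIntegral.integral_same

lemma PhiF_hasDerivAt (hcont : Continuous (phiF a x y)) (r : ℝ) :
    HasDerivAt (PhiF a x y) (phiF a x y r) r :=
  (hcont.integral_hasStrictDerivAt 0 r).hasDerivAt

lemma PhiF_continuous (hcont : Continuous (phiF a x y)) : Continuous (PhiF a x y) := by
  have : Differentiable ℝ (PhiF a x y) := fun r => (PhiF_hasDerivAt hcont r).differentiableAt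
  exact this.continuous

lemma PhiF_pos (hmono : StrictMono (phiF a x y)) (hcont : Continuous (phiF a x y))
    {t : ℝ} (ht : 0 < t) : 0 < PhiF a x y t := by
  apply intervalIntegral.intervalIntegral_pos_of_pos_on
    (hcont.intervalIntegrable 0 t) _ ht
  intro τ hτ
  exact phiF_pos hmono hτ.1

lemma PhiF_mono (hmono : StrictMono (phiF a x y)) (hcont : Continuous (phiF a x y))
    {t₁ t₂ : ℝ} (h0 : 0 ≤ t₁) (h : t₁ ≤ t₂) : PhiF a x y t₁ ≤ PhiF a x y t₂ := by
  have hadd : PhiF a x y t₁ + ∫ τ in t₁..t₂, phiF a x y τ = PhiF a x y t₂ :=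
    intervalIntegral.integral_add_adjacent_intervals
      (hcont.intervalIntegrable 0 t₁) (hcont.intervalIntegrable t₁ t₂)
  have hnn : 0 ≤ ∫ τ in t₁..t₂, phiF a x y τ :=
    intervalIntegral.integral_nonneg h (fun τ hτ => phiF_nonneg hmono (h0.trans hτ.1))
  linarith

lemma PhiF_nonneg (hmono : StrictMono (phiF a x y)) (hcont : Continuous (phiF a x y))
    {t : ℝ} (ht : 0 ≤ t) : 0 ≤ PhiF a x y t := by
  rw [← PhiF_zero (a := a) (x := x) (y := y)]
  exact PhiF_mono hmono hcont le_rfl ht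

end Helpers
section Scaling

variable {N : ℕ} {a : Eucl N → Eucl N → ℝ → ℝ} {x y : Eucl N} {φm φp : ℝ}

/-- derivative of `m ↦ Φ(m t) * m ^ (-e)` -/
lemma aux_hasDerivAt (hcont : Continuous (phiF a x y)) (t e : ℝ) {m : ℝ} (hm : 0 < m) :
    HasDerivAt (fun m : ℝ => PhiF a x y (m * t) * m ^ (-e))
      (phiF a x y (m * t) * t * m ^ (-e) + PhiF a x y (m * t) * (-e * m ^ (-e - 1))) m := by
  have h1 : HasDerivAt (fun m : ℝ => PhiF a x y (m * t)) (phiF a x y (m * t) * t) m := by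
    have := (PhiF_hasDerivAt hcont (m * t)).comp m ((hasDerivAt_id m).mul_const t)
    simpa [Function.comp_def] using this
  have h2 : HasDerivAt (fun m : ℝ => m ^ (-e)) (-e * m ^ (-e - 1)) m :=
    Real.hasDerivAt_rpow_const (Or.inl hm.ne')
  simpa [Pi.mul_def] using h1.mul h2

lemma key_ineq (hmono : StrictMono (phiF a x y)) (hcont : Continuous (phiF a x y))
    (hΦ1 : ∀ t, 0 < t →
      φm ≤ t * phiF a x y t / PhiF a x y t ∧ t * phiF a x y t / PhiF a x y t ≤ φp)
    {t : ℝ} (ht : 0 < t) :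
    φm * PhiF a x y t ≤ t * phiF a x y t ∧ t * phiF a x y t ≤ φp * PhiF a x y t := by
  have hP := PhiF_pos hmono hcont ht
  obtain ⟨h1, h2⟩ := hΦ1 t ht
  constructor
  · exact (le_div_iff₀ hP).mp h1
  · exact (div_le_iff₀ hP).mp h2

lemma PhiF_scale_ge (hmono : StrictMono (phiF a x y)) (hcont : Continuous (phiF a x y))
    (hΦ1 : ∀ t, 0 < t →
      φm ≤ t * phiF a x y t / PhiF a x y t ∧ t * phiF a x y t / PhiF a x y t ≤ φp)
    {t μ : ℝ} (ht : 0 ≤ t) (hμ : 1 ≤ μ) :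
    μ ^ φm * PhiF a x y t ≤ PhiF a x y (μ * t) := by
  rcases ht.eq_or_lt with h | h
  · rw [← h, mul_zero, PhiF_zero, mul_zero]
  -- monotone function g m = Φ(m t) m^{-φm} on Ici 1
  have hg : MonotoneOn (fun m : ℝ => PhiF a x y (m * t) * m ^ (-φm)) (Set.Ici 1) := by
    apply monotoneOn_of_deriv_nonneg (convex_Ici 1)
    · intro m hm
      have hm0 : (0:ℝ) < m := lt_of_lt_of_le one_pos hm
      exact (aux_hasDerivAt hcont t φm hm0).continuousAt.continuousWithinAt
    · intro m hm
      rw [interior_Ici] at hm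
      have hm0 : (0:ℝ) < m := lt_trans one_pos hm
      exact (aux_hasDerivAt hcont t φm hm0).differentiableAt.differentiableWithinAt
    · intro m hm
      rw [interior_Ici] at hm
      have hm0 : (0:ℝ) < m := lt_trans one_pos hm
      rw [(aux_hasDerivAt hcont t φm hm0).deriv]
      have hkey := (key_ineq hmono hcont hΦ1 (mul_pos hm0 h)).1
      have hsplit : m ^ (-φm) = m * m ^ (-φm - 1) := by
        nth_rewrite 2 [← Real.rpow_one m]
        rw [← Real.rpow_add hm0]
        congr 1; ring
      have hpow : (0:ℝ) < m ^ (-φm - 1) := Real.rpow_pos_of_pos hm0 _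
      calc (0:ℝ) ≤ (m * t * phiF a x y (m * t) - φm * PhiF a x y (m * t)) * m ^ (-φm - 1) := by
            apply mul_nonneg (by linarith) hpow.le
        _ = phiF a x y (m * t) * t * m ^ (-φm) + PhiF a x y (m * t) * (-φm * m ^ (-φm - 1)) := by
            rw [hsplit]; ring
  have := hg (Set.mem_Ici.mpr le_rfl) (Set.mem_Ici.mpr hμ) hμ
  simp only [one_mul, Real.one_rpow, mul_one] at this
  have hμ0 : (0:ℝ) < μ := lt_of_lt_of_le one_pos hμ
  calc μ ^ φm * PhiF a x y t ≤ μ ^ φm * (PhiF a x y (μ * t) * μ ^ (-φm)) := by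
        apply mul_le_mul_of_nonneg_left this (Real.rpow_pos_of_pos hμ0 _).le
    _ = PhiF a x y (μ * t) := by
        rw [mul_comm (μ ^ φm), mul_assoc, ← Real.rpow_add hμ0]
        simp

lemma PhiF_scale_le (hmono : StrictMono (phiF a x y)) (hcont : Continuous (phiF a x y))
    (hΦ1 : ∀ t, 0 < t →
      φm ≤ t * phiF a x y t / PhiF a x y t ∧ t * phiF a x y t / PhiF a x y t ≤ φp)
    {t μ : ℝ} (ht : 0 ≤ t) (hμ : 1 ≤ μ) :
    PhiF a x y (μ * t) ≤ μ ^ φp * PhiF a x y t := by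
  rcases ht.eq_or_lt with h | h
  · rw [← h, mul_zero, PhiF_zero, mul_zero]
  have hφp0 : 0 < φp := by
    have h1 := (key_ineq hmono hcont hΦ1 h).2
    have hP := PhiF_pos hmono hcont h
    have hphi := phiF_pos hmono h
    nlinarith
  have hg : AntitoneOn (fun m : ℝ => PhiF a x y (m * t) * m ^ (-φp)) (Set.Ici 1) := by
    apply antitoneOn_of_deriv_nonpos (convex_Ici 1)
    · intro m hm
      have hm0 : (0:ℝ) < m := lt_of_lt_of_le one_pos hm
      exact (aux_hasDerivAt hcont t φp hm0).continuousAt.continuousWithinAt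
    · intro m hm
      rw [interior_Ici] at hm
      have hm0 : (0:ℝ) < m := lt_trans one_pos hm
      exact (aux_hasDerivAt hcont t φp hm0).differentiableAt.differentiableWithinAt
    · intro m hm
      rw [interior_Ici] at hm
      have hm0 : (0:ℝ) < m := lt_trans one_pos hm
      rw [(aux_hasDerivAt hcont t φp hm0).deriv]
      have hkey := (key_ineq hmono hcont hΦ1 (mul_pos hm0 h)).2
      have hsplit : m ^ (-φp) = m * m ^ (-φp - 1) := by
        nth_rewrite 2 [← Real.rpow_one m]
        rw [← Real.rpow_add hm0]
        congr 1; ring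
      have hpow : (0:ℝ) < m ^ (-φp - 1) := Real.rpow_pos_of_pos hm0 _
      calc phiF a x y (m * t) * t * m ^ (-φp) + PhiF a x y (m * t) * (-φp * m ^ (-φp - 1))
          = (m * t * phiF a x y (m * t) - φp * PhiF a x y (m * t)) * m ^ (-φp - 1) := by
            rw [hsplit]; ring
        _ ≤ 0 := mul_nonpos_of_nonpos_of_nonneg (by linarith) hpow.le
  have := hg (Set.mem_Ici.mpr le_rfl) (Set.mem_Ici.mpr hμ) hμ
  simp only [one_mul, Real.one_rpow, mul_one] at this
  have hμ0 : (0:ℝ) < μ := lt_of_lt_of_le one_pos hμ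
  calc PhiF a x y (μ * t) = μ ^ φp * (PhiF a x y (μ * t) * μ ^ (-φp)) := by
        rw [mul_comm (μ ^ φp), mul_assoc, ← Real.rpow_add hμ0]
        simp
    _ ≤ μ ^ φp * PhiF a x y t := by
        apply mul_le_mul_of_nonneg_left this (Real.rpow_pos_of_pos hμ0 _).le

end Scaling
section Modular

variable {N : ℕ} {a : Eucl N → Eucl N → ℝ → ℝ} {φm φp : ℝ}
  {s : ℝ} {Ω : Set (Eucl N)} {β : Eucl N → ℝ} {u : Eucl N → ℝ}

lemma div_mono_num {A B d : ℝ} (h : A ≤ B) (hd : 0 ≤ d) : A / d ≤ B / d := by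
  exact div_le_div_of_nonneg_right h hd

variable (hmono : ∀ x y, StrictMono (phiF a x y))
  (hcont : ∀ x y, Continuous (phiF a x y))
  (hΦ1 : ∀ x y t, 0 < t →
      φm ≤ t * phiF a x y t / PhiF a x y t ∧ t * phiF a x y t / PhiF a x y t ≤ φp)

include hmono hcont hΦ1

lemma real_upper {x y : Eucl N} {r lam : ℝ} (hr : 0 ≤ r) (hlam : 0 < lam) :
    PhiF a x y r ≤ (max lam 1) ^ φp * PhiF a x y (r / lam) := by
  set μ := max lam 1 with hμdef
  have hμ1 : 1 ≤ μ := le_max_right _ _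
  have hμ0 : 0 < μ := lt_of_lt_of_le one_pos hμ1
  have h1 : PhiF a x y r = PhiF a x y (μ * (r / μ)) := by
    rw [mul_div_cancel₀ _ hμ0.ne']
  rw [h1]
  calc PhiF a x y (μ * (r / μ)) ≤ μ ^ φp * PhiF a x y (r / μ) :=
        PhiF_scale_le (hmono x y) (hcont x y) (fun t ht => hΦ1 x y t ht)
          (div_nonneg hr hμ0.le) hμ1
    _ ≤ μ ^ φp * PhiF a x y (r / lam) := by
        apply mul_le_mul_of_nonneg_left _ (Real.rpow_pos_of_pos hμ0 _).le
        apply PhiF_mono (hmono x y) (hcont x y) (div_nonneg hr hμ0.le)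
        exact div_le_div_of_nonneg_left hr hlam (le_max_left _ _)

lemma real_lower {x y : Eucl N} {r lamp : ℝ} (hr : 0 ≤ r) (h1 : 1 ≤ lamp) :
    lamp ^ φm * PhiF a x y (r / lamp) ≤ PhiF a x y r := by
  have h0 : 0 < lamp := lt_of_lt_of_le one_pos h1
  have hrw : PhiF a x y r = PhiF a x y (lamp * (r / lamp)) := by
    rw [mul_div_cancel₀ _ h0.ne']
  rw [hrw]
  exact PhiF_scale_ge (hmono x y) (hcont x y) (fun t ht => hΦ1 x y t ht)
    (div_nonneg hr h0.le) h1

end Modular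
section Modular2

variable {N : ℕ} {a : Eucl N → Eucl N → ℝ → ℝ} {φm φp : ℝ}
  {s : ℝ} {Ω : Set (Eucl N)} {β : Eucl N → ℝ} {u : Eucl N → ℝ} {lam lamp : ℝ}

variable (hmono : ∀ x y, StrictMono (phiF a x y))
  (hcont : ∀ x y, Continuous (phiF a x y))
  (hΦ1 : ∀ x y t, 0 < t →
      φm ≤ t * phiF a x y t / PhiF a x y t ∧ t * phiF a x y t / PhiF a x y t ≤ φp)

include hmono hcont hΦ1

lemma modQ_upper (hlam : 0 < lam) :
    modQ a s Ω u 1 ≤ ENNReal.ofReal ((max lam 1) ^ φp) * modQ a s Ω u lam := by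
  rw [modQ, modQ, ← lintegral_const_mul' _ _ ENNReal.ofReal_ne_top]
  apply lintegral_mono
  intro p
  dsimp only
  have hds : (0:ℝ) ≤ dist p.1 p.2 ^ s := Real.rpow_nonneg dist_nonneg s
  have harg1 : |u p.1 - u p.2| / (1 * dist p.1 p.2 ^ s)
      = |u p.1 - u p.2| / dist p.1 p.2 ^ s := by rw [one_mul]
  have harg2 : |u p.1 - u p.2| / (lam * dist p.1 p.2 ^ s)
      = (|u p.1 - u p.2| / dist p.1 p.2 ^ s) / lam := by rw [mul_comm, ← div_div]
  rw [harg1, harg2, ← ENNReal.ofReal_mul (by positivity), ← mul_div_assoc]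
  apply ENNReal.ofReal_le_ofReal
  apply div_mono_num _ (Real.rpow_nonneg dist_nonneg _)
  exact real_upper hmono hcont hΦ1 (div_nonneg (abs_nonneg _) hds) hlam

lemma modQ_lower (h1 : 1 ≤ lamp) :
    ENNReal.ofReal (lamp ^ φm) * modQ a s Ω u lamp ≤ modQ a s Ω u 1 := by
  rw [modQ, modQ, ← lintegral_const_mul' _ _ ENNReal.ofReal_ne_top]
  apply lintegral_mono
  intro p
  dsimp only
  have hds : (0:ℝ) ≤ dist p.1 p.2 ^ s := Real.rpow_nonneg dist_nonneg s
  have harg1 : |u p.1 - u p.2| / (1 * dist p.1 p.2 ^ s)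
      = |u p.1 - u p.2| / dist p.1 p.2 ^ s := by rw [one_mul]
  have harg2 : |u p.1 - u p.2| / (lamp * dist p.1 p.2 ^ s)
      = (|u p.1 - u p.2| / dist p.1 p.2 ^ s) / lamp := by rw [mul_comm, ← div_div]
  rw [harg1, harg2, ← ENNReal.ofReal_mul (by positivity), ← mul_div_assoc]
  apply ENNReal.ofReal_le_ofReal
  apply div_mono_num _ (Real.rpow_nonneg dist_nonneg _)
  exact real_lower hmono hcont hΦ1 (div_nonneg (abs_nonneg _) hds) h1

lemma modO_upper (hlam : 0 < lam) :
    modO a Ω u 1 ≤ ENNReal.ofReal ((max lam 1) ^ φp) * modO a Ω u lam := by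
  rw [modO, modO, ← lintegral_const_mul' _ _ ENNReal.ofReal_ne_top]
  apply lintegral_mono
  intro x
  dsimp only
  rw [div_one, ← ENNReal.ofReal_mul (by positivity)]
  exact ENNReal.ofReal_le_ofReal
    (real_upper hmono hcont hΦ1 (abs_nonneg _) hlam)

lemma modO_lower (h1 : 1 ≤ lamp) :
    ENNReal.ofReal (lamp ^ φm) * modO a Ω u lamp ≤ modO a Ω u 1 := by
  rw [modO, modO, ← lintegral_const_mul' _ _ ENNReal.ofReal_ne_top]
  apply lintegral_mono
  intro x
  dsimp only
  rw [div_one, ← ENNReal.ofReal_mul (by positivity)]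
  exact ENNReal.ofReal_le_ofReal
    (real_lower hmono hcont hΦ1 (abs_nonneg _) h1)

lemma modB_upper (hβ0 : ∀ᵐ x ∂(volume.restrict Ωᶜ), 0 ≤ β x) (hlam : 0 < lam) :
    modB a Ω β u 1 ≤ ENNReal.ofReal ((max lam 1) ^ φp) * modB a Ω β u lam := by
  rw [modB, modB, ← lintegral_const_mul' _ _ ENNReal.ofReal_ne_top]
  apply lintegral_mono_ae
  filter_upwards [hβ0] with x hβx
  rw [div_one, ← ENNReal.ofReal_mul (by positivity)]
  apply ENNReal.ofReal_le_ofReal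
  calc β x * PhiF a x x |u x|
      ≤ β x * ((max lam 1) ^ φp * PhiF a x x (|u x| / lam)) :=
        mul_le_mul_of_nonneg_left
          (real_upper hmono hcont hΦ1 (abs_nonneg _) hlam) hβx
    _ = (max lam 1) ^ φp * (β x * PhiF a x x (|u x| / lam)) := by ring

lemma modB_lower (hβ0 : ∀ᵐ x ∂(volume.restrict Ωᶜ), 0 ≤ β x) (h1 : 1 ≤ lamp) :
    ENNReal.ofReal (lamp ^ φm) * modB a Ω β u lamp ≤ modB a Ω β u 1 := by
  rw [modB, modB, ← lintegral_const_mul' _ _ ENNReal.ofReal_ne_top]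
  apply lintegral_mono_ae
  filter_upwards [hβ0] with x hβx
  rw [div_one, ← ENNReal.ofReal_mul (by positivity)]
  apply ENNReal.ofReal_le_ofReal
  calc lamp ^ φm * (β x * PhiF a x x (|u x| / lamp))
      = β x * (lamp ^ φm * PhiF a x x (|u x| / lamp)) := by ring
    _ ≤ β x * PhiF a x x |u x| :=
        mul_le_mul_of_nonneg_left
          (real_lower hmono hcont hΦ1 (abs_nonneg _) h1) hβx

end Modular2

section RhoDiv

variable {N : ℕ} {a : Eucl N → Eucl N → ℝ → ℝ}
  {s : ℝ} {Ω : Set (Eucl N)} {β : Eucl N → ℝ} {u : Eucl N → ℝ} {lam : ℝ}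

lemma rhoS_div (hlam : 0 < lam) :
    rhoS a s Ω β (fun z => u z / lam)
      = modQ a s Ω u lam + modO a Ω u lam + modB a Ω β u lam := by
  have habs : ∀ v w : ℝ, |v / lam - w / lam| = |v - w| / lam := by
    intro v w
    rw [div_sub_div_same, abs_div, abs_of_pos hlam]
  have habs1 : ∀ v : ℝ, |v / lam| = |v| / lam := by
    intro v; rw [abs_div, abs_of_pos hlam]
  unfold rhoS
  congr 1
  congr 1
  · unfold modQ
    apply lintegral_congr
    intro p
    simp only [habs, one_mul, div_div]
  · unfold modO
    apply lintegral_congr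
    intro x
    simp only [habs1, div_one]
  · unfold modB
    apply lintegral_congr
    intro x
    simp only [habs1, div_one]

end RhoDiv
section Qside

variable {N : ℕ} {Ω : Set (Eucl N)} {q : Eucl N → ℝ} {u : Eucl N → ℝ} {qp : ℝ}

lemma aemeas_abs_rpow {α : Type*} [MeasurableSpace α] {μ : MeasureTheory.Measure α}
    {u : α → ℝ} {q : α → ℝ} (hu : Measurable u) (hqm : AEMeasurable q μ)
    (hq : ∀ᵐ x ∂μ, q x ≠ 0) : AEMeasurable (fun x => |u x| ^ q x) μ := by
  have hg'm : Measurable (fun x => if u x = 0 then (0:ℝ)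
      else Real.exp (Real.log |u x| * hqm.mk q x)) := by
    refine Measurable.ite (hu (measurableSet_singleton 0)) measurable_const ?_
    exact Real.measurable_exp.comp ((Real.measurable_log.comp hu.abs).mul hqm.measurable_mk)
  refine ⟨_, hg'm, ?_⟩
  filter_upwards [hqm.ae_eq_mk, hq] with x hx1 hx2
  by_cases h0 : u x = 0
  · simp [h0, Real.zero_rpow hx2]
  · rw [if_neg h0, Real.rpow_def_of_pos (abs_pos.mpr h0), hx1]

lemma q_modular_bound (hΩo : IsOpen Ω)
    (hq1 : ∀ x ∈ closure Ω, 1 < q x) (hqp_le : ∀ x ∈ closure Ω, q x ≤ qp)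
    {lam0 K : ℝ} (hlam0 : 0 < lam0) (hK : lam0 ≤ K) (h1K : 1 ≤ K)
    (hint : (∫⁻ x in Ω, ENNReal.ofReal (|u x / lam0| ^ q x)) ≤ 1) :
    (∫⁻ x in Ω, ENNReal.ofReal (|u x| ^ q x)) ≤ ENNReal.ofReal (K ^ qp) := by
  have hK0 : (0:ℝ) < K := lt_of_lt_of_le one_pos h1K
  have hstep : (∫⁻ x in Ω, ENNReal.ofReal (|u x| ^ q x))
      ≤ ENNReal.ofReal (K ^ qp) * ∫⁻ x in Ω, ENNReal.ofReal (|u x / lam0| ^ q x) := by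
    rw [← lintegral_const_mul' _ _ ENNReal.ofReal_ne_top]
    apply lintegral_mono_ae
    filter_upwards [ae_restrict_mem hΩo.measurableSet] with x hx
    have hqx0 : (0:ℝ) ≤ q x := by
      have := hq1 x (subset_closure hx); linarith
    have h1 : |u x| ^ q x = K ^ q x * (|u x| / K) ^ q x := by
      rw [← Real.mul_rpow hK0.le (by positivity), mul_div_cancel₀ _ hK0.ne']
    have h2 : (|u x| / K) ^ q x ≤ |u x / lam0| ^ q x := by
      rw [abs_div, abs_of_pos hlam0]
      exact Real.rpow_le_rpow (by positivity)
        (div_le_div_of_nonneg_left (abs_nonneg _) hlam0 hK) hqx0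
    have h3 : K ^ q x ≤ K ^ qp :=
      Real.rpow_le_rpow_of_exponent_le h1K (hqp_le x (subset_closure hx))
    have h4 : |u x| ^ q x ≤ K ^ qp * |u x / lam0| ^ q x := by
      rw [h1]
      exact mul_le_mul h3 h2 (by positivity) (by positivity)
    calc ENNReal.ofReal (|u x| ^ q x)
        ≤ ENNReal.ofReal (K ^ qp * |u x / lam0| ^ q x) := ENNReal.ofReal_le_ofReal h4
      _ = ENNReal.ofReal (K ^ qp) * ENNReal.ofReal (|u x / lam0| ^ q x) :=
          ENNReal.ofReal_mul (by positivity)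
  calc (∫⁻ x in Ω, ENNReal.ofReal (|u x| ^ q x))
      ≤ ENNReal.ofReal (K ^ qp) * ∫⁻ x in Ω, ENNReal.ofReal (|u x / lam0| ^ q x) := hstep
    _ ≤ ENNReal.ofReal (K ^ qp) * 1 := mul_le_mul_right hint _
    _ = ENNReal.ofReal (K ^ qp) := mul_one _

lemma normq_extract {B : ℝ} (hB : 0 ≤ B)
    (h : normq Ω q u ≤ ENNReal.ofReal B) :
    ∃ lam0 : ℝ, 0 < lam0 ∧ lam0 ≤ B + 1 ∧
      (∫⁻ x in Ω, ENNReal.ofReal (|u x / lam0| ^ q x)) ≤ 1 := by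
  have hlt : normq Ω q u < ENNReal.ofReal (B + 1) :=
    lt_of_le_of_lt h (by
      rw [ENNReal.ofReal_lt_ofReal_iff (by linarith)]; linarith)
  rw [normq, sInf_lt_iff] at hlt
  obtain ⟨l, ⟨lam0, hlam0, rfl, hint⟩, hl⟩ := hlt
  refine ⟨lam0, hlam0, ?_, hint⟩
  rw [ENNReal.ofReal_lt_ofReal_iff (by linarith)] at hl
  linarith

lemma F_integral_bound (hΩo : IsOpen Ω) (hu : Measurable u)
    (hqc : ContinuousOn q (closure Ω)) (hq1 : ∀ x ∈ closure Ω, 1 < q x)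
    {f : Eucl N → ℝ → ℝ} {c₁ : ℝ} (hc₁ : 0 < c₁)
    (hF : ∀ x ∈ Ω, ∀ t : ℝ, |Ff f x t| ≤ c₁ * |t| ^ q x)
    {A : ℝ} (hA : 0 ≤ A)
    (hfin : (∫⁻ x in Ω, ENNReal.ofReal (|u x| ^ q x)) ≤ ENNReal.ofReal A) :
    (∫ x in Ω, Ff f x (u x)) ≤ c₁ * A := by
  have hqm : AEMeasurable q (volume.restrict Ω) :=
    (hqc.mono subset_closure).aemeasurable hΩo.measurableSet
  have hq0 : ∀ᵐ x ∂(volume.restrict Ω), q x ≠ 0 := by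
    filter_upwards [ae_restrict_mem hΩo.measurableSet] with x hx
    have := hq1 x (subset_closure hx); intro h; rw [h] at this; linarith
  have hgm : AEMeasurable (fun x => c₁ * |u x| ^ q x) (volume.restrict Ω) :=
    aemeasurable_const.mul (aemeas_abs_rpow hu hqm hq0)
  have hgnn : ∀ x, 0 ≤ c₁ * |u x| ^ q x := fun x => by positivity
  have hgfin : HasFiniteIntegral (fun x => c₁ * |u x| ^ q x) (volume.restrict Ω) := by
    rw [hasFiniteIntegral_iff_norm]
    have heq : ∀ x, ENNReal.ofReal ‖c₁ * |u x| ^ q x‖ = ENNReal.ofReal c₁ *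
        ENNReal.ofReal (|u x| ^ q x) := by
      intro x
      rw [Real.norm_eq_abs, abs_of_nonneg (hgnn x), ENNReal.ofReal_mul hc₁.le]
    calc (∫⁻ x in Ω, ENNReal.ofReal ‖c₁ * |u x| ^ q x‖)
        = ∫⁻ x in Ω, ENNReal.ofReal c₁ * ENNReal.ofReal (|u x| ^ q x) := by
          simp only [heq]
      _ = ENNReal.ofReal c₁ * ∫⁻ x in Ω, ENNReal.ofReal (|u x| ^ q x) :=
          lintegral_const_mul' _ _ ENNReal.ofReal_ne_top
      _ ≤ ENNReal.ofReal c₁ * ENNReal.ofReal A := mul_le_mul_right hfin _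
      _ < ⊤ := ENNReal.mul_lt_top ENNReal.ofReal_lt_top ENNReal.ofReal_lt_top
  have hgint : Integrable (fun x => c₁ * |u x| ^ q x) (volume.restrict Ω) :=
    ⟨hgm.aestronglyMeasurable, hgfin⟩
  have hle : ∀ᵐ x ∂(volume.restrict Ω), ‖Ff f x (u x)‖ ≤ c₁ * |u x| ^ q x := by
    filter_upwards [ae_restrict_mem hΩo.measurableSet] with x hx
    rw [Real.norm_eq_abs]
    exact hF x hx (u x)
  have hnorm := norm_integral_le_of_norm_le hgint hle
  have hgval : (∫ x in Ω, c₁ * |u x| ^ q x) ≤ c₁ * A := by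
    rw [integral_eq_lintegral_of_nonneg_ae (Filter.Eventually.of_forall hgnn)
      hgm.aestronglyMeasurable]
    have : (∫⁻ x in Ω, ENNReal.ofReal (c₁ * |u x| ^ q x))
        ≤ ENNReal.ofReal (c₁ * A) := by
      calc (∫⁻ x in Ω, ENNReal.ofReal (c₁ * |u x| ^ q x))
          = ENNReal.ofReal c₁ * ∫⁻ x in Ω, ENNReal.ofReal (|u x| ^ q x) := by
            simp only [fun x : Eucl N => ENNReal.ofReal_mul (p := c₁) (q := |u x| ^ q x) hc₁.le]
            exact lintegral_const_mul' _ _ ENNReal.ofReal_ne_top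
        _ ≤ ENNReal.ofReal c₁ * ENNReal.ofReal A := mul_le_mul_right hfin _
        _ = ENNReal.ofReal (c₁ * A) := (ENNReal.ofReal_mul hc₁.le).symm
    calc (∫⁻ x in Ω, ENNReal.ofReal (c₁ * |u x| ^ q x)).toReal
        ≤ (ENNReal.ofReal (c₁ * A)).toReal := ENNReal.toReal_mono ENNReal.ofReal_ne_top this
      _ = c₁ * A := ENNReal.toReal_ofReal (by positivity)
  calc (∫ x in Ω, Ff f x (u x)) ≤ ‖∫ x in Ω, Ff f x (u x)‖ := le_abs_self _
    _ ≤ ∫ x in Ω, c₁ * |u x| ^ q x := hnorm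
    _ ≤ c₁ * A := hgval

end Qside
section Growth

lemma tendsto_coerc {qp φm : ℝ} (hqp : 0 < qp) (hlt : qp < φm) (A B : ℝ) (hA : 0 < A) :
    Filter.Tendsto (fun T : ℝ => A * T ^ φm - B * T ^ qp) atTop atTop := by
  have h1 : Filter.Tendsto (fun T : ℝ => T ^ qp * (A * T ^ (φm - qp) - B)) atTop atTop := by
    apply Filter.Tendsto.atTop_mul_atTop₀ (tendsto_rpow_atTop hqp)
    apply Filter.tendsto_atTop_add_const_right
    exact Filter.Tendsto.const_mul_atTop hA (tendsto_rpow_atTop (by linarith))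
  apply Filter.Tendsto.congr' _ h1
  filter_upwards [eventually_gt_atTop 0] with T hT
  have : T ^ qp * (A * T ^ (φm - qp) - B) = A * (T ^ qp * T ^ (φm - qp)) - B * T ^ qp := by
    ring
  rw [this, ← Real.rpow_add hT]
  norm_num

end Growth
/-- for every `λ > 0` the functional `J_λ` is coercive on `X`. -/
theorem statement13
    (N : ℕ) (hN : 1 ≤ N)
    (Ω : Set (Eucl N)) (hΩo : IsOpen Ω) (hΩb : Bornology.IsBounded Ω) (hΩne : Ω.Nonempty)
    (s : ℝ) (hs : s ∈ Set.Ioo (0:ℝ) 1)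
    (a : Eucl N → Eucl N → ℝ → ℝ)
    (ha : Measurable fun p : Eucl N × Eucl N × ℝ => a p.1 p.2.1 p.2.2)
    (hmono : ∀ x y, StrictMono (phiF a x y))
    (hcont : ∀ x y, Continuous (phiF a x y))
    (hsurj : ∀ x y, Function.Surjective (phiF a x y))
    (β : Eucl N → ℝ) (hβm : Measurable β)
    (hβb : ∃ C : ℝ, ∀ᵐ x ∂(volume.restrict Ωᶜ), |β x| ≤ C)
    (hβ0 : ∀ᵐ x ∂(volume.restrict Ωᶜ), 0 ≤ β x)
    (φm φp : ℝ) (hφm : 1 < φm) (hφmp : φm ≤ φp)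
    (hΦ1 : ∀ x y t, 0 < t →
      φm ≤ t * phiF a x y t / PhiF a x y t ∧ t * phiF a x y t / PhiF a x y t ≤ φp)
    (q : Eucl N → ℝ) (hqc : ContinuousOn q (closure Ω)) (hq1 : ∀ x ∈ closure Ω, 1 < q x)
    (qp : ℝ) (hqp_le : ∀ x ∈ closure Ω, q x ≤ qp)
    (f : Eucl N → ℝ → ℝ)
    (hfmeas : ∀ t : ℝ, Measurable fun x => f x t)
    (hfcont : ∀ x : Eucl N, Continuous fun t => f x t)
    (hqpφ : qp < φm)
    (c₁ : ℝ) (hc₁ : 0 < c₁)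
    (hF : ∀ x ∈ Ω, ∀ t : ℝ, |Ff f x t| ≤ c₁ * |t| ^ q x)
    (c : ℝ) (hc : 0 < c)
    (hemb : ∀ u ∈ XsetM a s Ω β, normq Ω q u ≤ ENNReal.ofReal c * normM a s Ω β u) :
    ∀ lam : ℝ, 0 < lam → ∀ M : ℝ, ∃ R : ℝ, 0 < R ∧
      ∀ u ∈ XsetM a s Ω β, ENNReal.ofReal R ≤ normM a s Ω β u →
        M ≤ Jlam a s Ω β f lam u := by
  intro lam hlam M
  -- basic exponent facts
  obtain ⟨x₀, hx₀⟩ := hΩne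
  have hx₀c : x₀ ∈ closure Ω := subset_closure hx₀
  have hqp1 : 1 < qp := lt_of_lt_of_le (hq1 x₀ hx₀c) (hqp_le x₀ hx₀c)
  have hqp0 : 0 < qp := by linarith
  -- constants
  set A : ℝ := 1 / (2 * 2 ^ φm) with hAdef
  have h2pow : (0:ℝ) < 2 ^ φm := Real.rpow_pos_of_pos two_pos _
  have hA : 0 < A := by positivity
  set B : ℝ := lam * c₁ * (c + 1) ^ qp with hBdef
  -- choose R
  obtain ⟨R₀, hR₀⟩ := Filter.eventually_atTop.mp
    ((tendsto_coerc hqp0 hqpφ A B hA).eventually_ge_atTop M)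
  refine ⟨max R₀ 2, lt_of_lt_of_le two_pos (le_max_right _ _), ?_⟩
  intro u hu huR
  obtain ⟨humeas, ⟨lam₀, hlam₀, hfin₀⟩, hnormfin⟩ := hu
  set T : ℝ := (normM a s Ω β u).toReal with hTdef
  have hne : normM a s Ω β u ≠ ⊤ := hnormfin.ne
  have hTval : ENNReal.ofReal T = normM a s Ω β u := ENNReal.ofReal_toReal hne
  have hT0' : (0:ℝ) ≤ T := ENNReal.toReal_nonneg
  have hRT : max R₀ 2 ≤ T := by
    rw [← hTval] at huR
    exact (ENNReal.ofReal_le_ofReal_iff hT0').mp huR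
  have hT2 : 2 ≤ T := le_trans (le_max_right _ _) hRT
  have hT0 : 0 < T := by linarith
  -- finiteness of modulars at scale 1
  have hfin' : modQ a s Ω u lam₀ + modO a Ω u lam₀ + modB a Ω β u lam₀ < ⊤ := by
    rw [← rhoS_div hlam₀]; exact hfin₀
  have hQB := ENNReal.add_lt_top.mp hfin'
  have hQO := ENNReal.add_lt_top.mp hQB.1
  have hQ1 : modQ a s Ω u 1 < ⊤ :=
    lt_of_le_of_lt (modQ_upper hmono hcont hΦ1 hlam₀)
      (ENNReal.mul_lt_top ENNReal.ofReal_lt_top hQO.1)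
  have hO1 : modO a Ω u 1 < ⊤ :=
    lt_of_le_of_lt (modO_upper hmono hcont hΦ1 hlam₀)
      (ENNReal.mul_lt_top ENNReal.ofReal_lt_top hQO.2)
  have hB1 : modB a Ω β u 1 < ⊤ :=
    lt_of_le_of_lt (modB_upper hmono hcont hΦ1 hβ0 hlam₀)
      (ENNReal.mul_lt_top ENNReal.ofReal_lt_top hQB.2)
  -- lower bound for the modular at scale 1
  set lamp : ℝ := T / 2 with hlampdef
  have hlamp1 : 1 ≤ lamp := by rw [hlampdef]; linarith
  have hlamp0 : 0 < lamp := by linarith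
  have hgt : ¬ rhoS a s Ω β (fun x => u x / lamp) ≤ 1 := by
    intro hle
    have h1 : normM a s Ω β u ≤ ENNReal.ofReal lamp :=
      sInf_le ⟨lamp, hlamp0, rfl, hle⟩
    have h2 : ENNReal.ofReal lamp < ENNReal.ofReal T :=
      (ENNReal.ofReal_lt_ofReal_iff hT0).mpr (by rw [hlampdef]; linarith)
    rw [hTval] at h2
    exact absurd (lt_of_le_of_lt h1 h2) (lt_irrefl _)
  have hsum1 : 1 ≤ modQ a s Ω u lamp + modO a Ω u lamp + modB a Ω β u lamp := by
    rw [← rhoS_div hlamp0]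
    exact (not_le.mp hgt).le
  have hmul : ENNReal.ofReal (lamp ^ φm)
      ≤ modQ a s Ω u 1 + modO a Ω u 1 + modB a Ω β u 1 := by
    calc ENNReal.ofReal (lamp ^ φm) = ENNReal.ofReal (lamp ^ φm) * 1 := (mul_one _).symm
      _ ≤ ENNReal.ofReal (lamp ^ φm)
          * (modQ a s Ω u lamp + modO a Ω u lamp + modB a Ω β u lamp) :=
          mul_le_mul_right hsum1 _
      _ = ENNReal.ofReal (lamp ^ φm) * modQ a s Ω u lamp
          + ENNReal.ofReal (lamp ^ φm) * modO a Ω u lamp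
          + ENNReal.ofReal (lamp ^ φm) * modB a Ω β u lamp := by
          rw [mul_add, mul_add]
      _ ≤ modQ a s Ω u 1 + modO a Ω u 1 + modB a Ω β u 1 :=
          add_le_add (add_le_add (modQ_lower hmono hcont hΦ1 hlamp1)
            (modO_lower hmono hcont hΦ1 hlamp1)) (modB_lower hmono hcont hΦ1 hβ0 hlamp1)
  have hStoReal : lamp ^ φm ≤ (modQ a s Ω u 1).toReal + (modO a Ω u 1).toReal
      + (modB a Ω β u 1).toReal := by
    have hSne : modQ a s Ω u 1 + modO a Ω u 1 + modB a Ω β u 1 ≠ ⊤ := by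
      intro hcontra
      rcases ENNReal.add_eq_top.mp hcontra with h | h
      · rcases ENNReal.add_eq_top.mp h with h' | h'
        · exact hQ1.ne h'
        · exact hO1.ne h'
      · exact hB1.ne h
    have := ENNReal.toReal_mono hSne hmul
    rwa [ENNReal.toReal_ofReal (by positivity),
      ENNReal.toReal_add (ENNReal.add_ne_top.mpr ⟨hQ1.ne, hO1.ne⟩) hB1.ne,
      ENNReal.toReal_add hQ1.ne hO1.ne] at this
  -- the F-term bound
  have hembu := hemb u ⟨humeas, ⟨lam₀, hlam₀, hfin₀⟩, hnormfin⟩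
  rw [← hTval, ← ENNReal.ofReal_mul hc.le] at hembu
  obtain ⟨lam₁, hlam₁, hlam₁le, hint₁⟩ := normq_extract (by positivity) hembu
  have hqmod := q_modular_bound hΩo hq1 hqp_le hlam₁ hlam₁le
    (by nlinarith) hint₁
  have hFint : (∫ x in Ω, Ff f x (u x)) ≤ c₁ * (c * T + 1) ^ qp :=
    F_integral_bound hΩo humeas hqc hq1 hc₁ hF (by positivity) hqmod
  -- put everything together
  have hMle : M ≤ A * T ^ φm - B * T ^ qp := hR₀ T (le_trans (le_max_left _ _) hRT)
  have hhalf : A * T ^ φm = (1/2) * lamp ^ φm := by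
    rw [hAdef, hlampdef, div_eq_mul_inv T 2, Real.mul_rpow hT0' (by norm_num),
      Real.inv_rpow (by norm_num)]
    field_simp
  have hBle : lam * c₁ * (c * T + 1) ^ qp ≤ B * T ^ qp := by
    rw [hBdef]
    have h1 : c * T + 1 ≤ (c + 1) * T := by nlinarith
    have h2 : (c * T + 1) ^ qp ≤ ((c + 1) * T) ^ qp :=
      Real.rpow_le_rpow (by positivity) h1 hqp0.le
    have h3 : ((c + 1) * T) ^ qp = (c + 1) ^ qp * T ^ qp :=
      Real.mul_rpow (by positivity) hT0'
    rw [mul_assoc (lam * c₁)]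
    rw [h3] at h2
    exact mul_le_mul_of_nonneg_left h2 (by positivity)
  have hmodnn : (0:ℝ) ≤ (modO a Ω u 1).toReal + (modB a Ω β u 1).toReal := by positivity
  have hFfinal : lam * (∫ x in Ω, Ff f x (u x)) ≤ B * T ^ qp := by
    calc lam * (∫ x in Ω, Ff f x (u x)) ≤ lam * (c₁ * (c * T + 1) ^ qp) :=
          mul_le_mul_of_nonneg_left hFint hlam.le
      _ = lam * c₁ * (c * T + 1) ^ qp := by ring
      _ ≤ B * T ^ qp := hBle
  rw [Jlam]
  have hO1nn : (0:ℝ) ≤ (modO a Ω u 1).toReal := ENNReal.toReal_nonneg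
  have hB1nn : (0:ℝ) ≤ (modB a Ω β u 1).toReal := ENNReal.toReal_nonneg
  nlinarith [hStoReal, hMle, hFfinal, hhalf]
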